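/- Let n ≥ 1 be an integer and R > 0. Then lim_{a→0⁺} [ ∫_{{y ∈ ℝ^{2n} : ‖y‖² < 2a}} (e^{−‖y‖²/(2a)} − 1)·‖y‖^{−2n} dλ(y) + ∫_{{y ∈ ℝ^{2n} : 2a < ‖y‖² < R²}} e^{−‖y‖²/(2a)}·‖y‖^{−2n} dλ(y) ] = −γ · vol(S^{2n−1})/2, where γ is the Euler–Mascheroni constant. -/

import Mathlib

open MeasureTheory Filter

/-- The volume of the unit sphere `S^{2n-1} ⊂ ℝ^{2n}`. -/
noncomputable def volSphere (n : ℕ) : ℝ := 2 * Real.pi ^ n / (Nat.factorial (n - 1))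

open Set Real

local notation "γ" => Real.eulerMascheroniConstant

lemma aux_rpow_int : IntegrableOn (fun t : ℝ => 2 * t ^ (-(1:ℝ)/2)) (Ioc (0:ℝ) 1) := by
  have h := (intervalIntegral.intervalIntegrable_rpow' (a := (0:ℝ)) (b := 1)
    (r := -(1:ℝ)/2) (h := by norm_num))
  rw [intervalIntegrable_iff_integrableOn_Ioc_of_le zero_le_one] at h
  exact h.const_mul 2

lemma abs_log_le (t : ℝ) (ht : t ∈ Ioc (0:ℝ) 1) : |Real.log t| ≤ 2 * t ^ (-(1:ℝ)/2) := by
  obtain ⟨ht0, ht1⟩ := ht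
  have hlog : Real.log t ≤ 0 := Real.log_nonpos ht0.le ht1
  rw [abs_of_nonpos hlog]
  have h1 : -Real.log t = 2 * Real.log (t ^ (-(1:ℝ)/2)) := by
    rw [Real.log_rpow ht0]; ring
  rw [h1]
  have h2 : Real.log (t ^ (-(1:ℝ)/2)) ≤ t ^ (-(1:ℝ)/2) - 1 :=
    Real.log_le_sub_one_of_pos (Real.rpow_pos_of_pos ht0 _)
  nlinarith [Real.rpow_pos_of_pos ht0 (-(1:ℝ)/2)]

lemma integrableOn_log_exp_Ioc : IntegrableOn (fun t : ℝ => Real.log t * Real.exp (-t)) (Ioc (0:ℝ) 1) := by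
  refine Integrable.mono aux_rpow_int ?_ ?_
  · exact ((Real.measurable_log.mul (Real.measurable_exp.comp measurable_neg)).aestronglyMeasurable)
  · filter_upwards [ae_restrict_mem measurableSet_Ioc] with t ht
    have h1 : |Real.log t| ≤ 2 * t ^ (-(1:ℝ)/2) := abs_log_le t ht
    have h2 : Real.exp (-t) ≤ 1 := Real.exp_le_one_iff.mpr (by linarith [ht.1])
    have h3 : (0:ℝ) < t ^ (-(1:ℝ)/2) := Real.rpow_pos_of_pos ht.1 _
    rw [Real.norm_eq_abs, Real.norm_eq_abs, abs_mul, abs_of_nonneg (Real.exp_pos _).le]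
    calc |Real.log t| * Real.exp (-t) ≤ |Real.log t| * 1 := by
          exact mul_le_mul_of_nonneg_left h2 (abs_nonneg _)
      _ = |Real.log t| := mul_one _
      _ ≤ 2 * t ^ (-(1:ℝ)/2) := h1
      _ ≤ |2 * t ^ (-(1:ℝ)/2)| := le_abs_self _

lemma integrableOn_log_exp_Ioi : IntegrableOn (fun t : ℝ => Real.log t * Real.exp (-t)) (Ioi (1:ℝ)) := by
  have hint : IntegrableOn (fun t : ℝ => t ^ (1:ℝ) * Real.exp (-t ^ (1:ℝ))) (Ioi (0:ℝ)) :=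
    integrableOn_rpow_mul_exp_neg_rpow (by norm_num) one_pos
  refine Integrable.mono (hint.mono_set (Ioi_subset_Ioi zero_le_one)) ?_ ?_
  · exact ((Real.measurable_log.mul (Real.measurable_exp.comp measurable_neg)).aestronglyMeasurable)
  · filter_upwards [ae_restrict_mem measurableSet_Ioi] with t ht
    have ht1 : (1:ℝ) ≤ t := le_of_lt ht
    have h1 : Real.log t ≤ t := (Real.log_le_sub_one_of_pos (by linarith)).trans (by linarith)
    have h0 : 0 ≤ Real.log t := Real.log_nonneg ht1
    rw [Real.norm_eq_abs, Real.norm_eq_abs, abs_mul, abs_of_nonneg h0,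
      abs_of_nonneg (Real.exp_pos _).le, Real.rpow_one]
    rw [abs_of_nonneg (by positivity : (0:ℝ) ≤ t * Real.exp (-t))]
    exact mul_le_mul_of_nonneg_right h1 (Real.exp_pos _).le

lemma integral_log_exp_eq : ∫ t in Ioi (0:ℝ), Real.log t * Real.exp (-t) = -γ := by
  have h1 := Complex.hasDerivAt_GammaIntegral (s := 1) (by norm_num)
  have hopen : IsOpen {s : ℂ | 0 < s.re} := isOpen_lt continuous_const Complex.continuous_re
  have hmem : (1:ℂ) ∈ {s : ℂ | 0 < s.re} := by norm_num
  have heq : Complex.Gamma =ᶠ[nhds (1:ℂ)] Complex.GammaIntegral := by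
    filter_upwards [hopen.mem_nhds hmem] with s hs
    exact Complex.Gamma_eq_integral hs
  have h2 : HasDerivAt Complex.Gamma
      (∫ t : ℝ in Ioi 0, (t:ℂ) ^ ((1:ℂ) - 1) * (Real.log t * Real.exp (-t))) 1 :=
    h1.congr_of_eventuallyEq heq
  have hD : (∫ t : ℝ in Ioi 0, (t:ℂ) ^ ((1:ℂ) - 1) * (Real.log t * Real.exp (-t)))
      = ((∫ t in Ioi (0:ℝ), Real.log t * Real.exp (-t) : ℝ) : ℂ) := by
    have hc : ∀ t ∈ Ioi (0:ℝ), (t:ℂ) ^ ((1:ℂ) - 1) * (Real.log t * Real.exp (-t))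
        = ((Real.log t * Real.exp (-t) : ℝ) : ℂ) := by
      intro t ht
      rw [sub_self, Complex.cpow_zero, one_mul]
      push_cast
      ring
    exact (setIntegral_congr_fun measurableSet_Ioi hc).trans integral_ofReal
  rw [hD] at h2
  have h3 := h2.real_of_complex
  have h4 : (fun x : ℝ => (Complex.Gamma (x:ℂ)).re) = Real.Gamma := by
    funext x; rw [Complex.Gamma_ofReal]; simp
  rw [h4] at h3
  have h5 := h3.unique Real.hasDerivAt_Gamma_one
  simpa using h5

lemma tendsto_Ioc_left (f : ℝ → ℝ) (hf : IntegrableOn f (Ioc (0:ℝ) 1)) :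
    Tendsto (fun ε => ∫ t in Ioc ε 1, f t) (nhdsWithin 0 (Ioi 0))
      (nhds (∫ t in Ioc (0:ℝ) 1, f t)) := by
  have key : Tendsto (fun ε : ℝ => ∫ t in Ioc (0:ℝ) 1, (Ioi ε).indicator f t)
      (nhdsWithin 0 (Ioi 0)) (nhds (∫ t in Ioc (0:ℝ) 1, f t)) := by
    refine tendsto_integral_filter_of_dominated_convergence (fun t => ‖f t‖)
      (Eventually.of_forall fun ε => hf.1.indicator measurableSet_Ioi) ?_ hf.norm ?_
    · filter_upwards with ε
      filter_upwards with t
      exact norm_indicator_le_norm_self f t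
    · filter_upwards [ae_restrict_mem measurableSet_Ioc] with t ht
      have hev : ∀ᶠ ε in nhdsWithin (0:ℝ) (Ioi 0), (Ioi ε).indicator f t = f t := by
        filter_upwards [mem_nhdsWithin_of_mem_nhds (Iio_mem_nhds ht.1)] with ε hε
        exact indicator_of_mem (by exact hε) f
      exact Tendsto.congr' (hev.mono fun ε h => h.symm) tendsto_const_nhds
  refine key.congr' ?_
  filter_upwards [self_mem_nhdsWithin] with ε (hε : (0:ℝ) < ε)
  have hset : Ioi ε ∩ Ioc 0 1 = Ioc ε 1 := by
    ext t
    simp only [mem_inter_iff, mem_Ioi, mem_Ioc]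
    exact ⟨fun ⟨h1, _, h3⟩ => ⟨h1, h3⟩, fun ⟨h1, h2⟩ => ⟨h1, hε.trans h1, h2⟩⟩
  rw [integral_indicator measurableSet_Ioi, Measure.restrict_restrict measurableSet_Ioi, hset]

lemma integrableOn_A : IntegrableOn (fun t : ℝ => (Real.exp (-t) - 1) * t⁻¹) (Ioc (0:ℝ) 1) := by
  have hconst : IntegrableOn (fun _ : ℝ => (1:ℝ)) (Ioc (0:ℝ) 1) :=
    integrableOn_const measure_Ioc_lt_top.ne
  refine Integrable.mono hconst ?_ ?_
  · exact (((Real.measurable_exp.comp measurable_neg).sub measurable_const).mul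
      measurable_inv).aestronglyMeasurable
  · filter_upwards [ae_restrict_mem measurableSet_Ioc] with t ht
    have h1 : Real.exp (-t) ≤ 1 := Real.exp_le_one_iff.mpr (by linarith [ht.1])
    have h2 : 1 - t ≤ Real.exp (-t) := by linarith [Real.add_one_le_exp (-t)]
    have h3 : |Real.exp (-t) - 1| ≤ t := by
      rw [abs_of_nonpos (by linarith)]; linarith
    rw [Real.norm_eq_abs, Real.norm_eq_abs, abs_mul, abs_inv, abs_of_nonneg ht.1.le, abs_one]
    calc |Real.exp (-t) - 1| * t⁻¹ ≤ t * t⁻¹ :=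
          mul_le_mul_of_nonneg_right h3 (inv_nonneg.mpr ht.1.le)
      _ = 1 := mul_inv_cancel₀ ht.1.ne'

lemma integral_Ioc_parts :
    ∫ t in Ioc (0:ℝ) 1, (Real.exp (-t) - 1) * t⁻¹
      = ∫ t in Ioc (0:ℝ) 1, Real.log t * Real.exp (-t) := by
  set φ : ℝ → ℝ := fun t => (Real.exp (-t) - 1) * t⁻¹ - Real.log t * Real.exp (-t) with hφ
  have hφint : IntegrableOn φ (Ioc (0:ℝ) 1) := integrableOn_A.sub integrableOn_log_exp_Ioc
  have hG : ∀ t : ℝ, 0 < t →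
      HasDerivAt (fun s => Real.log s * (Real.exp (-s) - 1)) (φ t) t := by
    intro t ht
    have h1 : HasDerivAt (fun s : ℝ => Real.exp (-s) - 1) (-Real.exp (-t)) t := by
      have := ((Real.hasDerivAt_exp (-t)).comp t ((hasDerivAt_id t).neg)).sub_const 1
      simpa using this
    have := (Real.hasDerivAt_log ht.ne').mul h1
    convert this using 1
    case e'_9 =>
      change (Real.exp (-t) - 1) * t⁻¹ - Real.log t * Real.exp (-t) = _
      ring
    all_goals rfl
  have h1 : ∀ ε ∈ Ioo (0:ℝ) 1, ∫ t in Ioc ε 1, φ t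
      = -(Real.log ε * (Real.exp (-ε) - 1)) := by
    intro ε hε
    have hsub : ∀ t ∈ uIcc ε 1, (0:ℝ) < t := by
      intro t htm
      rw [uIcc_of_le hε.2.le] at htm
      exact lt_of_lt_of_le hε.1 htm.1
    have hcont : ContinuousOn φ (uIcc ε 1) := by
      have hne : ∀ t ∈ uIcc ε 1, t ≠ (0:ℝ) := fun t htm => (hsub t htm).ne'
      refine ContinuousOn.sub ?_ ?_
      · exact (((Real.continuous_exp.comp continuous_neg).continuousOn.sub
          continuousOn_const).mul (continuousOn_id.inv₀ hne))
      · exact (Real.continuousOn_log.mono fun t htm => hne t htm).mul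
          (Real.continuous_exp.comp continuous_neg).continuousOn
    have hftc := intervalIntegral.integral_eq_sub_of_hasDerivAt
      (f := fun s => Real.log s * (Real.exp (-s) - 1)) (f' := φ)
      (fun t htm => hG t (hsub t htm)) (hcont.intervalIntegrable)
    rw [intervalIntegral.integral_of_le hε.2.le] at hftc
    rw [hftc]
    simp
  have h2 : Tendsto (fun ε => ∫ t in Ioc ε 1, φ t) (nhdsWithin 0 (Ioi 0))
      (nhds (∫ t in Ioc (0:ℝ) 1, φ t)) := tendsto_Ioc_left φ hφint
  have h3 : Tendsto (fun ε : ℝ => -(Real.log ε * (Real.exp (-ε) - 1)))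
      (nhdsWithin 0 (Ioi 0)) (nhds 0) := by
    have hb : Tendsto (fun ε : ℝ => -(Real.log ε * ε)) (nhdsWithin 0 (Ioi 0)) (nhds 0) := by
      have := (tendsto_log_mul_rpow_nhdsGT_zero (r := 1) one_pos).neg
      simpa using this
    refine squeeze_zero_norm' ?_ hb
    filter_upwards [Ioo_mem_nhdsGT_of_mem (Set.left_mem_Ico.mpr one_pos)] with ε hε
    have h1e : Real.exp (-ε) ≤ 1 := Real.exp_le_one_iff.mpr (by linarith [hε.1])
    have h2e : 1 - ε ≤ Real.exp (-ε) := by linarith [Real.add_one_le_exp (-ε)]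
    have hlog : Real.log ε ≤ 0 := Real.log_nonpos hε.1.le hε.2.le
    rw [norm_neg, Real.norm_eq_abs, abs_mul, abs_of_nonpos hlog]
    have habs : |Real.exp (-ε) - 1| ≤ ε := by
      rw [abs_of_nonpos (by linarith)]; linarith
    nlinarith [abs_nonneg (Real.exp (-ε) - 1)]
  have h4 : Tendsto (fun ε => ∫ t in Ioc ε 1, φ t) (nhdsWithin 0 (Ioi 0)) (nhds 0) := by
    refine h3.congr' ?_
    filter_upwards [Ioo_mem_nhdsGT_of_mem (Set.left_mem_Ico.mpr one_pos)] with ε hε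
    exact (h1 ε hε).symm
  have h5 : ∫ t in Ioc (0:ℝ) 1, φ t = 0 := tendsto_nhds_unique h2 h4
  have h6 := integral_sub integrableOn_A integrableOn_log_exp_Ioc
  rw [hφ] at h5
  rw [h6] at h5
  linarith

lemma integrableOn_exp_inv_Ioi : IntegrableOn (fun t : ℝ => Real.exp (-t) * t⁻¹) (Ioi (1:ℝ)) := by
  refine Integrable.mono (exp_neg_integrableOn_Ioi 1 one_pos) ?_ ?_
  · exact ((Real.measurable_exp.comp measurable_neg).mul measurable_inv).aestronglyMeasurable
  · filter_upwards [ae_restrict_mem measurableSet_Ioi] with t ht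
    have ht1 : (1:ℝ) ≤ t := le_of_lt ht
    have hinv : t⁻¹ ≤ 1 := by
      rw [inv_le_one_iff₀]; right; exact ht1
    rw [Real.norm_eq_abs, Real.norm_eq_abs, abs_mul, abs_of_nonneg (Real.exp_pos _).le,
      abs_inv, abs_of_nonneg (by linarith : (0:ℝ) ≤ t), neg_one_mul,
      abs_of_nonneg (Real.exp_pos _).le]
    calc Real.exp (-t) * t⁻¹ ≤ Real.exp (-t) * 1 :=
          mul_le_mul_of_nonneg_left hinv (Real.exp_pos _).le
      _ = Real.exp (-t) := mul_one _

lemma integral_Ioi_parts :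
    ∫ t in Ioi (1:ℝ), Real.exp (-t) * t⁻¹ = ∫ t in Ioi (1:ℝ), Real.log t * Real.exp (-t) := by
  set φ : ℝ → ℝ := fun t => Real.exp (-t) * t⁻¹ - Real.log t * Real.exp (-t) with hφ
  have hφint : IntegrableOn φ (Ioi (1:ℝ)) := integrableOn_exp_inv_Ioi.sub integrableOn_log_exp_Ioi
  have hG : ∀ t ∈ Ici (1:ℝ), HasDerivAt (fun s => Real.log s * Real.exp (-s)) (φ t) t := by
    intro t ht
    have ht0 : (0:ℝ) < t := lt_of_lt_of_le one_pos ht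
    have h1 : HasDerivAt (fun s : ℝ => Real.exp (-s)) (-Real.exp (-t)) t := by
      have := (Real.hasDerivAt_exp (-t)).comp t ((hasDerivAt_id t).neg)
      simpa [Function.comp_def] using this
    have := (Real.hasDerivAt_log ht0.ne').mul h1
    convert this using 1
    case e'_9 =>
      change Real.exp (-t) * t⁻¹ - Real.log t * Real.exp (-t) = _
      ring
    all_goals rfl
  have htend : Tendsto (fun t => Real.log t * Real.exp (-t)) atTop (nhds 0) := by
    refine squeeze_zero_norm' (a := fun t => t * Real.exp (-t)) ?_ ?_
    · filter_upwards [eventually_ge_atTop (1:ℝ)] with t ht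
      have h0 : 0 ≤ Real.log t := Real.log_nonneg ht
      have h1 : Real.log t ≤ t := (Real.log_le_sub_one_of_pos (by linarith)).trans (by linarith)
      rw [Real.norm_eq_abs, abs_mul, abs_of_nonneg h0, abs_of_nonneg (Real.exp_pos _).le]
      exact mul_le_mul_of_nonneg_right h1 (Real.exp_pos _).le
    · have := tendsto_pow_mul_exp_neg_atTop_nhds_zero 1
      simpa using this
  have h5 : ∫ t in Ioi (1:ℝ), φ t = 0 := by
    rw [integral_Ioi_of_hasDerivAt_of_tendsto' hG hφint htend]
    simp
  have h6 := integral_sub integrableOn_exp_inv_Ioi integrableOn_log_exp_Ioi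
  rw [hφ] at h5
  rw [h6] at h5
  linarith

lemma key_integral :
    (∫ t in Ioc (0:ℝ) 1, (Real.exp (-t) - 1) * t⁻¹)
      + ∫ t in Ioi (1:ℝ), Real.exp (-t) * t⁻¹ = -γ := by
  rw [integral_Ioc_parts, integral_Ioi_parts, ← integral_log_exp_eq,
    ← setIntegral_union (Ioc_disjoint_Ioi le_rfl) measurableSet_Ioi
      integrableOn_log_exp_Ioc integrableOn_log_exp_Ioi,
    Ioc_union_Ioi_eq_Ioi zero_le_one]

lemma sub_lemma (f : ℝ → ℝ) {c : ℝ} (hc : 0 < c) :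
    ∫ r in Ioi (0:ℝ), f (r^2 / c) / r = ∫ t in Ioi (0:ℝ), f t / (2*t) := by
  have h1 : (∫ x in Ioi (0:ℝ), (2 * x ^ ((2:ℝ)-1)) • (f (x^(2:ℝ)/c) / (2 * x^(2:ℝ))))
      = ∫ y in Ioi (0:ℝ), f (y/c) / (2*y) :=
    integral_comp_rpow_Ioi_of_pos (g := fun y => f (y/c) / (2*y)) two_pos
  have e1 : ∀ x ∈ Ioi (0:ℝ), f (x^2/c) / x
      = (2 * x ^ ((2:ℝ)-1)) • (f (x^(2:ℝ)/c) / (2 * x^(2:ℝ))) := by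
    intro x hx
    have hx0 : (0:ℝ) < x := hx
    have hr2 : (x:ℝ) ^ (2:ℝ) = x ^ 2 := by
      rw [show (2:ℝ) = ((2:ℕ):ℝ) by norm_num, Real.rpow_natCast]
    rw [smul_eq_mul, hr2, show (2:ℝ)-1 = (1:ℝ) by norm_num, Real.rpow_one]
    field_simp
  have key1 : ∫ r in Ioi (0:ℝ), f (r^2 / c) / r = ∫ y in Ioi (0:ℝ), f (y/c) / (2*y) :=
    (setIntegral_congr_fun measurableSet_Ioi e1).trans h1
  have h2 : (∫ x in Ioi (0:ℝ), f (c*x/c) / (2*(c*x)))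
      = c⁻¹ • ∫ y in Ioi (c*(0:ℝ)), f (y/c) / (2*y) :=
    integral_comp_mul_left_Ioi (g := fun y => f (y/c) / (2*y)) 0 hc
  have e2 : (∫ x in Ioi (0:ℝ), f (c*x/c) / (2*(c*x)))
      = ∫ x in Ioi (0:ℝ), c⁻¹ * (f x / (2*x)) := by
    refine setIntegral_congr_fun measurableSet_Ioi fun x hx => ?_
    have hx0 : (0:ℝ) < x := hx
    rw [mul_div_cancel_left₀ _ hc.ne', show 2*(c*x) = 2*x*c by ring, inv_mul_eq_div, div_div]
  rw [e2, integral_const_mul, mul_zero, smul_eq_mul] at h2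
  rw [key1]
  have := mul_left_cancel₀ (inv_ne_zero hc.ne') h2
  exact this.symm

lemma polar_eq (n : ℕ) (hn : 1 ≤ n) (f : ℝ → ℝ) :
    ∫ y : EuclideanSpace ℝ (Fin (2*n)), f ‖y‖
      = volSphere n * ∫ r in Ioi (0:ℝ), r ^ (2*n-1) * f r := by
  haveI : Nonempty (Fin (2*n)) := ⟨⟨0, by omega⟩⟩
  haveI : Nontrivial (EuclideanSpace ℝ (Fin (2*n))) := inferInstance
  rw [MeasureTheory.integral_fun_norm_addHaar (volume : Measure (EuclideanSpace ℝ (Fin (2*n)))) f]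
  rw [finrank_euclideanSpace_fin]
  have hball : (volume (Metric.ball (0 : EuclideanSpace ℝ (Fin (2*n))) 1)).toReal
      = Real.pi ^ n / (Nat.factorial n) := by
    rw [EuclideanSpace.volume_ball]
    rw [Fintype.card_fin]
    have h2 : ((2*n : ℕ) : ℝ)/2 + 1 = (n : ℝ) + 1 := by push_cast; ring
    have h1 : Real.sqrt Real.pi ^ (2*n) / Real.Gamma (((2*n : ℕ) : ℝ)/2 + 1)
        = Real.pi ^ n / (Nat.factorial n) := by
      rw [h2, Real.Gamma_nat_eq_factorial, pow_mul, Real.sq_sqrt Real.pi_nonneg]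
    rw [ENNReal.ofReal_one, one_pow, one_mul, h1, ENNReal.toReal_ofReal (by positivity)]
  rw [measureReal_def, hball]
  simp only [nsmul_eq_mul, smul_eq_mul]
  rw [← mul_assoc]
  congr 1
  have hfac : (Nat.factorial n : ℝ) = n * (Nat.factorial (n-1)) := by
    rw [← Nat.mul_factorial_pred (by omega : n ≠ 0)]
    push_cast
    ring
  rw [volSphere]
  have hfpos : (0:ℝ) < Nat.factorial (n-1) := by positivity
  have hn0 : (0:ℝ) < (n:ℝ) := by exact_mod_cast Nat.pos_of_ne_zero (by omega)
  push_cast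
  field_simp [hfac]
  ring
  exact hfac.symm

lemma indicator_step (S : Set ℝ) (F : ℝ → ℝ) (hsub : S ⊆ Ioi (0:ℝ)) (hS : MeasurableSet S) :
    ∫ t in Ioi (0:ℝ), S.indicator F t = ∫ t in S, F t := by
  rw [integral_indicator hS, Measure.restrict_restrict hS, inter_eq_left.mpr hsub]

theorem stmt_5 (n : ℕ) (hn : 1 ≤ n) (R : ℝ) (hR : 0 < R) :
    Tendsto (fun a : ℝ =>
        (∫ y in {y : EuclideanSpace ℝ (Fin (2 * n)) | ‖y‖ ^ 2 < 2 * a},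
            (Real.exp (-‖y‖ ^ 2 / (2 * a)) - 1) * (‖y‖ ^ (2 * n))⁻¹)
        + ∫ y in {y : EuclideanSpace ℝ (Fin (2 * n)) | 2 * a < ‖y‖ ^ 2 ∧ ‖y‖ ^ 2 < R ^ 2},
            Real.exp (-‖y‖ ^ 2 / (2 * a)) * (‖y‖ ^ (2 * n))⁻¹)
      (nhdsWithin 0 (Set.Ioi 0))
      (nhds (-Real.eulerMascheroniConstant * volSphere n / 2)) := by
  have main_eq : ∀ a : ℝ, 0 < a →
      ((∫ y in {y : EuclideanSpace ℝ (Fin (2 * n)) | ‖y‖ ^ 2 < 2 * a},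
            (Real.exp (-‖y‖ ^ 2 / (2 * a)) - 1) * (‖y‖ ^ (2 * n))⁻¹)
        + ∫ y in {y : EuclideanSpace ℝ (Fin (2 * n)) | 2 * a < ‖y‖ ^ 2 ∧ ‖y‖ ^ 2 < R ^ 2},
            Real.exp (-‖y‖ ^ 2 / (2 * a)) * (‖y‖ ^ (2 * n))⁻¹)
      = volSphere n * (∫ t in Ioo (0:ℝ) 1, (Real.exp (-t) - 1) * t⁻¹ / 2)
        + volSphere n * ∫ t in Ioo (1:ℝ) (R^2/(2*a)), Real.exp (-t) * t⁻¹ / 2 := by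
    intro a ha
    have hc : (0:ℝ) < 2*a := by linarith
    set g1 : ℝ → ℝ := (Ioo (0:ℝ) 1).indicator (fun t => Real.exp (-t) - 1) with hg1
    set g2 : ℝ → ℝ := (Ioo (1:ℝ) (R^2/(2*a))).indicator (fun t => Real.exp (-t)) with hg2
    set f1 : ℝ → ℝ := ({r : ℝ | r^2 < 2*a}).indicator
      (fun r => (Real.exp (-r^2/(2*a)) - 1) * (r^(2*n))⁻¹) with hf1
    set f2 : ℝ → ℝ := ({r : ℝ | 2*a < r^2 ∧ r^2 < R^2}).indicator
      (fun r => Real.exp (-r^2/(2*a)) * (r^(2*n))⁻¹) with hf2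
    have e_first : (∫ y in {y : EuclideanSpace ℝ (Fin (2 * n)) | ‖y‖ ^ 2 < 2 * a},
          (Real.exp (-‖y‖ ^ 2 / (2 * a)) - 1) * (‖y‖ ^ (2 * n))⁻¹)
        = volSphere n * ∫ t in Ioo (0:ℝ) 1, (Real.exp (-t) - 1) * t⁻¹ / 2 := by
      have hS : MeasurableSet {y : EuclideanSpace ℝ (Fin (2 * n)) | ‖y‖ ^ 2 < 2 * a} :=
        measurableSet_lt (measurable_norm.pow_const 2) measurable_const
      have step1 : (∫ y in {y : EuclideanSpace ℝ (Fin (2 * n)) | ‖y‖ ^ 2 < 2 * a},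
            (Real.exp (-‖y‖ ^ 2 / (2 * a)) - 1) * (‖y‖ ^ (2 * n))⁻¹)
          = ∫ y : EuclideanSpace ℝ (Fin (2 * n)), f1 ‖y‖ := by
        rw [← integral_indicator hS]
        refine integral_congr_ae (Eventually.of_forall fun y => ?_)
        rw [hf1]
        simp only [Set.indicator_apply, Set.mem_setOf_eq]
      have step3 : ∫ r in Ioi (0:ℝ), r^(2*n-1) * f1 r
          = ∫ r in Ioi (0:ℝ), g1 (r^2/(2*a)) / r := by
        refine setIntegral_congr_fun measurableSet_Ioi fun r hr => ?_
        have hr0 : (0:ℝ) < r := hr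
        by_cases hlt : r^2 < 2*a
        · have ht : r^2/(2*a) ∈ Ioo (0:ℝ) 1 := ⟨div_pos (by positivity) hc, (div_lt_one hc).mpr hlt⟩
          rw [hf1, hg1, Set.indicator_of_mem (by exact hlt), Set.indicator_of_mem ht]
          have h2n : 2*n = (2*n-1)+1 := by omega
          rw [neg_div, h2n, pow_succ]
          have hpow : r^(2*n-1) ≠ 0 := pow_ne_zero _ hr0.ne'
          field_simp
          simp only [Nat.add_sub_cancel]
          ring
        · rw [hf1, hg1, Set.indicator_of_notMem (by exact hlt),
            Set.indicator_of_notMem (fun hmem => hlt ((div_lt_one hc).mp hmem.2))]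
          rw [mul_zero, zero_div]
      have step5 : ∫ t in Ioi (0:ℝ), g1 t / (2*t)
          = ∫ t in Ioo (0:ℝ) 1, (Real.exp (-t) - 1) * t⁻¹ / 2 := by
        have hpt : ∀ t : ℝ, g1 t / (2*t)
            = (Ioo (0:ℝ) 1).indicator (fun t => (Real.exp (-t) - 1) * t⁻¹ / 2) t := by
          intro t
          by_cases ht : t ∈ Ioo (0:ℝ) 1
          · rw [hg1, Set.indicator_of_mem ht, Set.indicator_of_mem ht]
            rw [div_eq_mul_inv, mul_inv]
            ring
          · rw [hg1, Set.indicator_of_notMem ht, Set.indicator_of_notMem ht, zero_div]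
        calc ∫ t in Ioi (0:ℝ), g1 t / (2*t)
            = ∫ t in Ioi (0:ℝ), (Ioo (0:ℝ) 1).indicator
                (fun t => (Real.exp (-t) - 1) * t⁻¹ / 2) t :=
              integral_congr_ae (Eventually.of_forall fun t => hpt t)
          _ = ∫ t in Ioo (0:ℝ) 1, (Real.exp (-t) - 1) * t⁻¹ / 2 :=
              indicator_step _ _ (fun t ht => ht.1) measurableSet_Ioo
      rw [step1, polar_eq n hn f1, step3, sub_lemma _ hc, step5]
    have e_second : (∫ y in {y : EuclideanSpace ℝ (Fin (2 * n)) | 2 * a < ‖y‖ ^ 2 ∧ ‖y‖ ^ 2 < R ^ 2},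
          Real.exp (-‖y‖ ^ 2 / (2 * a)) * (‖y‖ ^ (2 * n))⁻¹)
        = volSphere n * ∫ t in Ioo (1:ℝ) (R^2/(2*a)), Real.exp (-t) * t⁻¹ / 2 := by
      have hS : MeasurableSet {y : EuclideanSpace ℝ (Fin (2 * n)) | 2 * a < ‖y‖ ^ 2 ∧ ‖y‖ ^ 2 < R ^ 2} := by
        refine MeasurableSet.inter ?_ ?_
        · exact measurableSet_lt measurable_const (measurable_norm.pow_const 2)
        · exact measurableSet_lt (measurable_norm.pow_const 2) measurable_const
      have step1 : (∫ y in {y : EuclideanSpace ℝ (Fin (2 * n)) | 2 * a < ‖y‖ ^ 2 ∧ ‖y‖ ^ 2 < R ^ 2},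
            Real.exp (-‖y‖ ^ 2 / (2 * a)) * (‖y‖ ^ (2 * n))⁻¹)
          = ∫ y : EuclideanSpace ℝ (Fin (2 * n)), f2 ‖y‖ := by
        rw [← integral_indicator hS]
        refine integral_congr_ae (Eventually.of_forall fun y => ?_)
        rw [hf2]
        simp only [Set.indicator_apply, Set.mem_setOf_eq]
      have step3 : ∫ r in Ioi (0:ℝ), r^(2*n-1) * f2 r
          = ∫ r in Ioi (0:ℝ), g2 (r^2/(2*a)) / r := by
        refine setIntegral_congr_fun measurableSet_Ioi fun r hr => ?_
        have hr0 : (0:ℝ) < r := hr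
        by_cases hlt : 2*a < r^2 ∧ r^2 < R^2
        · have ht : r^2/(2*a) ∈ Ioo (1:ℝ) (R^2/(2*a)) :=
            ⟨(one_lt_div hc).mpr hlt.1, (div_lt_div_iff_of_pos_right hc).mpr hlt.2⟩
          rw [hf2, hg2, Set.indicator_of_mem (by exact hlt), Set.indicator_of_mem ht]
          have h2n : 2*n = (2*n-1)+1 := by omega
          rw [neg_div, h2n, pow_succ]
          have hpow : r^(2*n-1) ≠ 0 := pow_ne_zero _ hr0.ne'
          field_simp
          simp only [Nat.add_sub_cancel, pow_succ]
        · have hnot : r^2/(2*a) ∉ Ioo (1:ℝ) (R^2/(2*a)) := by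
            intro hmem
            exact hlt ⟨(one_lt_div hc).mp hmem.1, (div_lt_div_iff_of_pos_right hc).mp hmem.2⟩
          rw [hf2, hg2, Set.indicator_of_notMem (by exact hlt), Set.indicator_of_notMem hnot]
          rw [mul_zero, zero_div]
      have step5 : ∫ t in Ioi (0:ℝ), g2 t / (2*t)
          = ∫ t in Ioo (1:ℝ) (R^2/(2*a)), Real.exp (-t) * t⁻¹ / 2 := by
        have hpt : ∀ t : ℝ, g2 t / (2*t)
            = (Ioo (1:ℝ) (R^2/(2*a))).indicator (fun t => Real.exp (-t) * t⁻¹ / 2) t := by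
          intro t
          by_cases ht : t ∈ Ioo (1:ℝ) (R^2/(2*a))
          · rw [hg2, Set.indicator_of_mem ht, Set.indicator_of_mem ht]
            rw [div_eq_mul_inv, mul_inv]
            ring
          · rw [hg2, Set.indicator_of_notMem ht, Set.indicator_of_notMem ht, zero_div]
        calc ∫ t in Ioi (0:ℝ), g2 t / (2*t)
            = ∫ t in Ioi (0:ℝ), (Ioo (1:ℝ) (R^2/(2*a))).indicator
                (fun t => Real.exp (-t) * t⁻¹ / 2) t :=
              integral_congr_ae (Eventually.of_forall fun t => hpt t)
          _ = ∫ t in Ioo (1:ℝ) (R^2/(2*a)), Real.exp (-t) * t⁻¹ / 2 :=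
              indicator_step _ _ (fun t ht => lt_trans one_pos ht.1) measurableSet_Ioo
      rw [step1, polar_eq n hn f2, step3, sub_lemma _ hc, step5]
    rw [e_first, e_second]
  -- the limit
  have hTa : Tendsto (fun a : ℝ => R^2/(2*a)) (nhdsWithin 0 (Ioi 0)) atTop := by
    have h1 : Tendsto (fun a : ℝ => a⁻¹) (nhdsWithin 0 (Ioi 0)) atTop := tendsto_inv_nhdsGT_zero
    have h2 := h1.const_mul_atTop (show (0:ℝ) < R^2/2 by positivity)
    refine h2.congr fun a => ?_
    rw [div_eq_mul_inv, div_eq_mul_inv, mul_inv, mul_assoc]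
  have hint2 : IntegrableOn (fun t : ℝ => Real.exp (-t) * t⁻¹ / 2) (Ioi (1:ℝ)) :=
    integrableOn_exp_inv_Ioi.div_const 2
  have hJ : Tendsto (fun a : ℝ => ∫ t in Ioo (1:ℝ) (R^2/(2*a)), Real.exp (-t) * t⁻¹ / 2)
      (nhdsWithin 0 (Ioi 0)) (nhds (∫ t in Ioi (1:ℝ), Real.exp (-t) * t⁻¹ / 2)) := by
    have h := intervalIntegral_tendsto_integral_Ioi 1 hint2 hTa
    refine h.congr' ?_
    have hev : ∀ᶠ a in nhdsWithin (0:ℝ) (Ioi 0), a ∈ Ioo (0:ℝ) (R^2/2) := by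
      exact Ioo_mem_nhdsGT_of_mem (Set.left_mem_Ico.mpr (by positivity))
    filter_upwards [hev] with a haa
    have hT1 : (1:ℝ) ≤ R^2/(2*a) := by
      rw [le_div_iff₀ (by linarith [haa.1] : (0:ℝ) < 2*a)]
      nlinarith [haa.1, haa.2]
    rw [intervalIntegral.integral_of_le hT1, integral_Ioc_eq_integral_Ioo]
  have hfinal : volSphere n * (∫ t in Ioo (0:ℝ) 1, (Real.exp (-t) - 1) * t⁻¹ / 2)
      + volSphere n * (∫ t in Ioi (1:ℝ), Real.exp (-t) * t⁻¹ / 2)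
      = -Real.eulerMascheroniConstant * volSphere n / 2 := by
    have h1 : ∫ t in Ioo (0:ℝ) 1, (Real.exp (-t) - 1) * t⁻¹ / 2
        = (∫ t in Ioc (0:ℝ) 1, (Real.exp (-t) - 1) * t⁻¹) / 2 := by
      rw [integral_Ioc_eq_integral_Ioo, integral_div]
    have h2 : ∫ t in Ioi (1:ℝ), Real.exp (-t) * t⁻¹ / 2
        = (∫ t in Ioi (1:ℝ), Real.exp (-t) * t⁻¹) / 2 := integral_div _ _
    rw [h1, h2, ← mul_add, ← add_div, key_integral]
    ring
  have htend : Tendsto (fun a : ℝ =>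
      volSphere n * (∫ t in Ioo (0:ℝ) 1, (Real.exp (-t) - 1) * t⁻¹ / 2)
      + volSphere n * ∫ t in Ioo (1:ℝ) (R^2/(2*a)), Real.exp (-t) * t⁻¹ / 2)
      (nhdsWithin 0 (Ioi 0)) (nhds (-Real.eulerMascheroniConstant * volSphere n / 2)) := by
    rw [← hfinal]
    exact tendsto_const_nhds.add ((hJ.const_mul (volSphere n)))
  refine htend.congr' ?_
  filter_upwards [self_mem_nhdsWithin] with a (ha : (0:ℝ) < a)
  exact (main_eq a ha).symm
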